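/- Let K be a field. Let V with operators (P,Q) and W with operators (S,T) be as follows: V has basis v₁,v₂,a₁,a₂ with P(v₁)=a₁, P(v₂)=a₂, P(a₁)=P(a₂)=0, Q=0; W has basis w₁,w₂,b₁,b₂ with S(w₁)=b₁, T(w₁)=b₂, and S, T zero on the other basis vectors. Then for every invertible 2×2 matrix (α_{ij}) over K, the module structures (α₁₁P+α₁₂Q, α₂₁P+α₂₂Q) on V and (S,T) on W are not isomorphic; i.e., V and W are not weakly isomorphic as K[x,y]-modules. -/

import Mathlib

/-- the two 4-dimensional modules of Lemma 4 are not weakly isomorphic: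
no twist of (P,Q) by an invertible 2×2 matrix is isomorphic to (S,T). -/
theorem stmt_10 {K V W : Type*} [Field K] [AddCommGroup V] [Module K V]
    [AddCommGroup W] [Module K W]
    (b : Module.Basis (Fin 4) K V) (c : Module.Basis (Fin 4) K W)
    (P Q : V →ₗ[K] V) (S T : W →ₗ[K] W)
    (hP0 : P (b 0) = b 2) (hP1 : P (b 1) = b 3) (hP2 : P (b 2) = 0) (hP3 : P (b 3) = 0)
    (hQ : Q = 0)
    (hS0 : S (c 0) = c 2) (hS1 : S (c 1) = 0) (hS2 : S (c 2) = 0) (hS3 : S (c 3) = 0)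
    (hT0 : T (c 0) = c 3) (hT1 : T (c 1) = 0) (hT2 : T (c 2) = 0) (hT3 : T (c 3) = 0) :
    ∀ M : Matrix (Fin 2) (Fin 2) K, IsUnit M →
      ¬ ∃ φ : V ≃ₗ[K] W,
        (∀ v, φ ((M 0 0 • P + M 0 1 • Q) v) = S (φ v)) ∧
        (∀ v, φ ((M 1 0 • P + M 1 1 • Q) v) = T (φ v)) := by
  intro M _ ⟨φ, h1, h2⟩
  subst hQ
  set v0 := φ.symm (c 0) with hv0
  set u := φ (P v0) with hu
  have e1 : c 2 = M 0 0 • u := by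
    have := (h1 v0).symm
    simpa [hu, hv0, hS0, LinearMap.add_apply, LinearMap.smul_apply, map_smul,
      LinearEquiv.apply_symm_apply] using this
  have e2 : c 3 = M 1 0 • u := by
    have := (h2 v0).symm
    simpa [hu, hv0, hT0, LinearMap.add_apply, LinearMap.smul_apply, map_smul,
      LinearEquiv.apply_symm_apply] using this
  have key : M 1 0 • c 2 - M 0 0 • c 3 = 0 := by
    rw [e1, e2, smul_smul, smul_smul, mul_comm, sub_self]
  by_cases h0 : M 1 0 = 0
  · rw [h0, zero_smul] at e2
    exact c.ne_zero 3 e2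
  · have li := c.linearIndependent
    have hsum : ∑ i, (if i = 2 then M 1 0 else if i = 3 then -(M 0 0) else 0 : K) • c i = 0 := by
      simpa [Fin.sum_univ_four, sub_eq_add_neg, neg_smul] using key
    have := Fintype.linearIndependent_iff.mp li _ hsum 2
    simp at this
    exact h0 this
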